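/- arXiv:1412.5086 — 3 statements merged into one kernel-verified Lean document; each statement's English description precedes it below -/
import Mathlib

section
/- Let Φ(ρ) = Σ_{j=1}^{N} K_j ρ K_j† be a quantum channel on L(X) with a unique invariant density operator ρ_∞, in the sense that the fixed-point space of Φ within L(X) is one-dimensional and spanned by ρ_∞. Then for any real coefficients c_1, …, c_N, setting m = Σ_j c_j Tr(K_j ρ_∞ K_j†), the operator Y = Σ_j c_j K_j† K_j − m·1_X lies in the image of (Id − Φ†), i.e., there exists L ∈ L(X) with (Id − Φ†)(L) = Σ_j c_j K_j† K_j − m·1_X. -/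
open Matrix
open scoped ComplexOrder

section aux
variable {n : Type*} [Fintype n] [DecidableEq n]

/-- trace pairing B ↦ (A ↦ Tr(A*B)) -/
noncomputable def tracePair : Matrix n n ℂ →ₗ[ℂ] Module.Dual ℂ (Matrix n n ℂ) where
  toFun B := {
    toFun := fun A => (A * B).trace
    map_add' := by intro A A'; simp [add_mul]
    map_smul' := by intro z A; simp [smul_mul_assoc] }
  map_add' := by intro B B'; ext A; simp [mul_add]
  map_smul' := by intro z B; ext A; simp [mul_smul_comm]

lemma tracePair_inj : Function.Injective (tracePair (n := n)) := by
  rw [injective_iff_map_eq_zero]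
  intro B hB
  ext i j
  have h := congrFun (congrArg DFunLike.coe hB) (Matrix.single j i 1)
  have h2 : (Matrix.single j i 1 * B).trace = B i j := by
    rw [Matrix.trace]
    simp [Matrix.diag, Matrix.mul_apply, Matrix.single, ite_and,
      Finset.sum_ite_eq, Finset.sum_ite_eq']
  simpa [tracePair, h2] using h

lemma tracePair_surj : Function.Surjective (tracePair (n := n)) := by
  have h := LinearMap.injective_iff_surjective_of_finrank_eq_finrank
    (f := tracePair (n := n)) (Subspace.dual_finrank_eq (V := Matrix n n ℂ)).symm
  exact h.mp tracePair_inj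
end aux

/-- Poisson-equation solvability, Lemma `Lexists`:
let `Φ(ρ) = Σ_j K_j ρ K_jᴴ` be a quantum channel with a unique invariant
density operator `ρ_∞` (the fixed-point space of `Φ` is one-dimensional,
spanned by `ρ_∞`).  Then for any real coefficients `c_j`, with
`m = Σ_j c_j Tr(K_j ρ_∞ K_jᴴ)`, the operator
`Y = Σ_j c_j K_jᴴ K_j − m·1` lies in the image of `Id − Φ†`, where
`Φ†(B) = Σ_j K_jᴴ B K_j` is the Hilbert–Schmidt adjoint of `Φ`. -/
theorem poisson_solvable
    {n : Type*} [Fintype n] [DecidableEq n] {N : ℕ}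
    (K : Fin N → Matrix n n ℂ)
    (hK : ∑ j, (K j)ᴴ * K j = 1)
    (ρinf : Matrix n n ℂ) (hpos : ρinf.PosSemidef) (htr : ρinf.trace = 1)
    (hfix : ∑ j, K j * ρinf * (K j)ᴴ = ρinf)
    (huniq : ∀ A : Matrix n n ℂ, (∑ j, K j * A * (K j)ᴴ) = A →
      ∃ z : ℂ, A = z • ρinf)
    (c : Fin N → ℝ) :
    ∃ L : Matrix n n ℂ,
      L - ∑ j, (K j)ᴴ * L * K j
        = (∑ j, (c j : ℂ) • ((K j)ᴴ * K j))
          - (∑ j, (c j : ℂ) * (K j * ρinf * (K j)ᴴ).trace) • (1 : Matrix n n ℂ) := by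
  classical
  set T : Matrix n n ℂ →ₗ[ℂ] Matrix n n ℂ := {
    toFun := fun A => A - ∑ j, K j * A * (K j)ᴴ
    map_add' := by intro A B; simp [mul_add, add_mul, Finset.sum_add_distrib]; abel
    map_smul' := by intro z A; simp [mul_smul_comm, smul_mul_assoc, Finset.smul_sum, smul_sub] }
    with hT
  set Y : Matrix n n ℂ := (∑ j, (c j : ℂ) • ((K j)ᴴ * K j))
      - (∑ j, (c j : ℂ) * (K j * ρinf * (K j)ᴴ).trace) • (1 : Matrix n n ℂ) with hY
  have hmem : tracePair Y ∈ (LinearMap.ker T).dualAnnihilator := by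
    rw [Submodule.mem_dualAnnihilator]
    intro A hA
    rw [LinearMap.mem_ker] at hA
    have hAfix : (∑ j, K j * A * (K j)ᴴ) = A := by
      have h0 : A - ∑ j, K j * A * (K j)ᴴ = 0 := hA
      linear_combination (norm := module) -h0
    obtain ⟨z, rfl⟩ := huniq A hAfix
    show ((z • ρinf) * Y).trace = 0
    have key : (ρinf * Y).trace = 0 := by
      rw [hY, mul_sub, trace_sub, Matrix.mul_sum, trace_sum]
      have h1 : ∀ j, (ρinf * ((c j : ℂ) • ((K j)ᴴ * K j))).trace
          = (c j : ℂ) * (K j * ρinf * (K j)ᴴ).trace := by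
        intro j
        rw [mul_smul_comm, trace_smul, smul_eq_mul]
        congr 1
        rw [← mul_assoc, trace_mul_comm, mul_assoc]
      simp only [h1]
      rw [mul_smul_comm, mul_one, trace_smul, htr, smul_eq_mul, mul_one, sub_self]
    rw [smul_mul_assoc, trace_smul, key, smul_zero]
  rw [← LinearMap.range_dualMap_eq_dualAnnihilator_ker] at hmem
  obtain ⟨D, hD⟩ := hmem
  obtain ⟨L, rfl⟩ := tracePair_surj D
  refine ⟨L, ?_⟩
  have hadj : tracePair (L - ∑ j, (K j)ᴴ * L * K j) = T.dualMap (tracePair L) := by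
    ext A
    show (A * (L - ∑ j, (K j)ᴴ * L * K j)).trace = ((A - ∑ j, K j * A * (K j)ᴴ) * L).trace
    have h2 : ∀ j, (A * ((K j)ᴴ * L * K j)).trace = (K j * A * (K j)ᴴ * L).trace := by
      intro j
      rw [show A * ((K j)ᴴ * L * K j) = (A * (K j)ᴴ * L) * K j by noncomm_ring,
        trace_mul_comm]
      congr 1
      noncomm_ring
    rw [mul_sub, sub_mul, trace_sub, trace_sub, Matrix.mul_sum, Finset.sum_mul,
      trace_sum, trace_sum]
    rw [Finset.sum_congr rfl fun j _ => h2 j]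
  apply tracePair_inj
  rw [hadj, hD]
end

section
/- Let {K_j} be Kraus operators of a channel Φ on L(X) with unique invariant state ρ_∞, and suppose L ∈ L(X) satisfies (Id − Φ†)(L) = Σ_j c_j K_j† K_j − m·1_X where m = Σ_j c_j Tr(K_j ρ_∞ K_j†). Define f(ρ, x) = Tr(ρ L) + x for ρ a density operator and x ∈ ℝ. Then for every density operator ρ and x ∈ ℝ, f(ρ, x) − Σ_j Tr(K_j ρ K_j†) · f(K_j ρ K_j† / Tr(K_j ρ K_j†), c_j) = x − m, where the sum runs over j with Tr(K_j ρ K_j†) > 0. -/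
open Matrix
open scoped ComplexOrder Classical

lemma psd_trace_nonneg {n : Type*} [Fintype n] {M : Matrix n n ℂ}
    (hM : M.PosSemidef) : 0 ≤ M.trace := by
  rw [Matrix.trace]
  refine Finset.sum_nonneg fun i _ => ?_
  exact hM.diag_nonneg

lemma psd_trace_zero {n : Type*} [Fintype n] [DecidableEq n] {M : Matrix n n ℂ}
    (hM : M.PosSemidef) (h : M.trace = 0) : M = 0 := by
  exact hM.trace_eq_zero_iff.mp h

/-- Lemma `f`: let `L` solve the Poisson equation
`(Id − Φ†)(L) = Σ_j c_j K_jᴴ K_j − m·1` with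
`m = Σ_j c_j Tr(K_j ρ_∞ K_jᴴ)`, and define `f(ρ, x) = Tr(ρ L) + x`.
Then for every density operator `ρ` and `x ∈ ℝ`,
`f(ρ,x) − Σ_j Tr(K_j ρ K_jᴴ) f(K_j ρ K_jᴴ / Tr(K_j ρ K_jᴴ), c_j) = x − m`,
the sum running over the `j` with `Tr(K_j ρ K_jᴴ) > 0`
(this is `(Id − P)f(ρ,x) = x − m` for the trajectory transition operator `P`). -/
theorem poisson_function_identity
    {n : Type*} [Fintype n] [DecidableEq n] {N : ℕ}
    (K : Fin N → Matrix n n ℂ)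
    (hK : ∑ j, (K j)ᴴ * K j = 1)
    (ρinf : Matrix n n ℂ) (hposinf : ρinf.PosSemidef) (htrinf : ρinf.trace = 1)
    (hfix : ∑ j, K j * ρinf * (K j)ᴴ = ρinf)
    (c : Fin N → ℝ)
    (m : ℂ) (hm : m = ∑ j, (c j : ℂ) * (K j * ρinf * (K j)ᴴ).trace)
    (L : Matrix n n ℂ)
    (hL : L - ∑ j, (K j)ᴴ * L * K j
        = (∑ j, (c j : ℂ) • ((K j)ᴴ * K j)) - m • (1 : Matrix n n ℂ))
    (f : Matrix n n ℂ → ℝ → ℂ)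
    (hf : ∀ ρ x, f ρ x = (ρ * L).trace + (x : ℂ))
    (ρ : Matrix n n ℂ) (hρ : ρ.PosSemidef) (hρtr : ρ.trace = 1) (x : ℝ) :
    f ρ x
      - ∑ j ∈ Finset.univ.filter (fun j => 0 < (K j * ρ * (K j)ᴴ).trace),
          (K j * ρ * (K j)ᴴ).trace
            * f (((K j * ρ * (K j)ᴴ).trace)⁻¹ • (K j * ρ * (K j)ᴴ)) (c j)
      = (x : ℂ) - m := by
  set M := fun j => K j * ρ * (K j)ᴴ with hM
  have hpsd : ∀ j, (M j).PosSemidef := fun j => by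
    simpa [hM, Matrix.mul_assoc] using hρ.mul_mul_conjTranspose_same (K j)
  -- step 1: the filtered sum equals the full sum of traces
  have step1 : ∑ j ∈ Finset.univ.filter (fun j => 0 < (M j).trace),
      (M j).trace * f (((M j).trace)⁻¹ • (M j)) (c j)
      = ∑ j, ((M j * L).trace + (c j : ℂ) * (M j).trace) := by
    rw [Finset.sum_filter]
    refine Finset.sum_congr rfl fun j _ => ?_
    by_cases hpos : 0 < (M j).trace
    · have hne : (M j).trace ≠ 0 := ne_of_gt hpos
      rw [if_pos hpos, hf, Matrix.smul_mul, Matrix.trace_smul, smul_eq_mul]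
      field_simp
    · rw [if_neg hpos]
      have h0 : (M j).trace = 0 :=
        (((psd_trace_nonneg (hpsd j)).lt_or_eq).resolve_left hpos).symm
      have hMz : M j = 0 := psd_trace_zero (hpsd j) h0
      rw [hMz]
      simp
  rw [hf, step1]
  -- cyclic trace identities
  have hcyc : ∀ j, (M j * L).trace = (ρ * ((K j)ᴴ * L * K j)).trace := by
    intro j
    show (K j * ρ * (K j)ᴴ * L).trace = _
    rw [Matrix.mul_assoc, Matrix.mul_assoc, Matrix.trace_mul_comm, Matrix.mul_assoc]
  have hcyc2 : ∀ j, (M j).trace = (ρ * ((K j)ᴴ * K j)).trace := by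
    intro j
    rw [hM, Matrix.trace_mul_cycle, ← Matrix.mul_assoc, Matrix.trace_mul_comm, Matrix.mul_assoc]
  simp_rw [hcyc, hcyc2]
  have hsum1 : ∑ j, (ρ * ((K j)ᴴ * L * K j)).trace
      = (ρ * ∑ j, (K j)ᴴ * L * K j).trace := by
    rw [Finset.mul_sum, Matrix.trace_sum]
  have hsum2 : ∑ j, (c j : ℂ) * (ρ * ((K j)ᴴ * K j)).trace
      = (ρ * ∑ j, (c j : ℂ) • ((K j)ᴴ * K j)).trace := by
    rw [Finset.mul_sum, Matrix.trace_sum]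
    exact Finset.sum_congr rfl fun j _ => by
      rw [Matrix.mul_smul, Matrix.trace_smul, smul_eq_mul]
  rw [Finset.sum_add_distrib, hsum1, hsum2]
  have key : (ρ * L).trace - (ρ * ∑ j, (K j)ᴴ * L * K j).trace
      = (ρ * ∑ j, (c j : ℂ) • ((K j)ᴴ * K j)).trace - m := by
    have := congrArg (fun A => (ρ * A).trace) hL
    simp only [Matrix.mul_sub, Matrix.trace_sub, Matrix.mul_smul, Matrix.mul_one,
      Matrix.trace_smul, smul_eq_mul, hρtr, mul_one] at this
    linear_combination this
  linear_combination key
end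

section
/- If a trace-preserving positive linear map Φ on L(X) has a one-dimensional fixed point space, then its unique fixed point (normalized to unit trace) can be chosen to be a density operator, and every operator A ∈ L(X) with Tr(ρ_∞ A) = 0 (Hilbert–Schmidt orthogonality to the fixed point of Φ) lies in Im(Id − Φ†). -/
open Matrix
open scoped ComplexOrder

set_option linter.unusedSectionVars false
set_option maxHeartbeats 1000000

section Aux

variable {n : Type*} [Fintype n] [DecidableEq n]

open scoped MatrixOrder in
lemma psd_exists_factor {A : Matrix n n ℂ} (hA : A.PosSemidef) : ∃ B : Matrix n n ℂ, A = Bᴴ * B := by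
  obtain ⟨X, hX, -, hXX⟩ :=
    CFC.exists_sqrt_of_isSelfAdjoint_of_quasispectrumRestricts hA.isHermitian
      (QuasispectrumRestricts.nnreal_of_nonneg hA.nonneg)
  exact ⟨X, by rw [← hXX, ← Matrix.star_eq_conjTranspose, hX.star_eq]⟩

lemma trace_nonneg_of_psd {A : Matrix n n ℂ} (hA : A.PosSemidef) : 0 ≤ A.trace := by
  obtain ⟨B, rfl⟩ := psd_exists_factor hA
  rw [Matrix.trace]
  refine Finset.sum_nonneg fun j _ => ?_
  rw [Matrix.diag_apply, Matrix.mul_apply]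
  refine Finset.sum_nonneg fun i _ => ?_
  simpa using star_mul_self_nonneg (B i j)

lemma eq_zero_of_psd_trace_zero {A : Matrix n n ℂ} (hA : A.PosSemidef) (h : A.trace = 0) :
    A = 0 := by
  obtain ⟨B, rfl⟩ := psd_exists_factor hA
  rw [show B = 0 from ?_, Matrix.mul_zero]
  have h2 : ∑ j, ∑ i, Complex.normSq (B i j) = 0 := by
    have := congrArg Complex.re h
    rw [Matrix.trace] at this
    simpa [Matrix.diag_apply, Matrix.mul_apply, Complex.normSq, Complex.re_sum,
      Complex.mul_re, Matrix.conjTranspose_apply] using this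
  ext i j
  have := (Finset.sum_eq_zero_iff_of_nonneg (fun j _ => Finset.sum_nonneg
    (fun i _ => Complex.normSq_nonneg (B i j)))).mp h2 j (Finset.mem_univ j)
  have := (Finset.sum_eq_zero_iff_of_nonneg (fun i _ => Complex.normSq_nonneg (B i j))).mp
    this i (Finset.mem_univ i)
  simpa using Complex.normSq_eq_zero.mp this

lemma herm_decomp {H : Matrix n n ℂ} (hH : H.IsHermitian) :
    ∃ P Q R : Matrix n n ℂ, P.PosSemidef ∧ Q.PosSemidef ∧ H = P - Q ∧
      Rᴴ = R ∧ R * R = R ∧ R * P = P ∧ R * Q = 0 := by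
  classical
  set U : Matrix n n ℂ := (hH.eigenvectorUnitary : Matrix n n ℂ) with hU
  have hU2 : Uᴴ * U = 1 := by
    have := (Matrix.mem_unitaryGroup_iff').mp hH.eigenvectorUnitary.2
    simpa [Matrix.star_eq_conjTranspose] using this
  set μ : n → ℝ := hH.eigenvalues with hμ
  have hspec : H = U * diagonal (fun i => ((μ i : ℂ))) * Uᴴ := by
    have := hH.spectral_theorem
    simpa [Matrix.star_eq_conjTranspose, Function.comp_def] using this
  have key : ∀ d e : n → ℂ, (U * diagonal d * Uᴴ) * (U * diagonal e * Uᴴ)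
      = U * diagonal (fun i => d i * e i) * Uᴴ := by
    intro d e
    simp only [Matrix.mul_assoc]
    rw [← Matrix.mul_assoc Uᴴ U, hU2, Matrix.one_mul, ← Matrix.mul_assoc (diagonal d),
      Matrix.diagonal_mul_diagonal]
  have hpsd : ∀ d : n → ℝ, (∀ i, 0 ≤ d i) →
      (U * diagonal (fun i => ((d i : ℂ))) * Uᴴ).PosSemidef := by
    intro d hd
    exact (posSemidef_diagonal_iff.mpr fun i => by
      simpa using Complex.zero_le_real.mpr (hd i)).mul_mul_conjTranspose_same U
  have hherm : ∀ d : n → ℝ, (U * diagonal (fun i => ((d i : ℂ))) * Uᴴ)ᴴ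
      = U * diagonal (fun i => ((d i : ℂ))) * Uᴴ := by
    intro d
    have hst : (star fun i => ((d i : ℂ))) = fun i => ((d i : ℂ)) := by
      funext i; simp [Complex.conj_ofReal]
    simp [Matrix.conjTranspose_mul, Matrix.diagonal_conjTranspose, hst, Matrix.mul_assoc]
  refine ⟨U * diagonal (fun i => ((max (μ i) 0 : ℝ) : ℂ)) * Uᴴ,
    U * diagonal (fun i => ((max (-μ i) 0 : ℝ) : ℂ)) * Uᴴ,
    U * diagonal (fun i => ((if 0 < μ i then (1:ℝ) else 0 : ℝ) : ℂ)) * Uᴴ,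
    hpsd _ (fun i => le_max_right _ _), hpsd _ (fun i => le_max_right _ _), ?_, hherm _, ?_, ?_, ?_⟩
  · have hd : (fun i => ((μ i : ℂ))) =
        (fun i => (((max (μ i) 0 : ℝ) : ℂ) - ((max (-μ i) 0 : ℝ) : ℂ))) := by
      funext i
      rw [← Complex.ofReal_sub, max_zero_sub_max_neg_zero_eq_self]
    rw [hspec, hd, ← Matrix.diagonal_sub, Matrix.mul_sub, Matrix.sub_mul]
  · rw [key]
    have : (fun i => ((if 0 < μ i then (1:ℝ) else 0 : ℝ) : ℂ) *
        ((if 0 < μ i then (1:ℝ) else 0 : ℝ) : ℂ)) =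
        (fun i => ((if 0 < μ i then (1:ℝ) else 0 : ℝ) : ℂ)) := by
      funext i; by_cases h : 0 < μ i <;> simp [h]
    rw [this]
  · rw [key]
    have : (fun i => ((if 0 < μ i then (1:ℝ) else 0 : ℝ) : ℂ) * ((max (μ i) 0 : ℝ) : ℂ)) =
        (fun i => ((max (μ i) 0 : ℝ) : ℂ)) := by
      funext i
      by_cases h : 0 < μ i
      · simp [h]
      · simp [h, max_eq_right (not_lt.mp h)]
    rw [this]
  · rw [key]
    have : (fun i => ((if 0 < μ i then (1:ℝ) else 0 : ℝ) : ℂ) * ((max (-μ i) 0 : ℝ) : ℂ)) =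
        (fun _ => (0 : ℂ)) := by
      funext i
      by_cases h : 0 < μ i
      · simp [h, max_eq_right (neg_nonpos.mpr h.le)]
      · simp [h]
    rw [this]
    simp

lemma herm_pres {Φ : Matrix n n ℂ →ₗ[ℂ] Matrix n n ℂ}
    (hpos : ∀ A : Matrix n n ℂ, A.PosSemidef → (Φ A).PosSemidef)
    {H : Matrix n n ℂ} (hH : H.IsHermitian) : (Φ H).IsHermitian := by
  obtain ⟨P, Q, R, hP, hQ, hPQ, -, -, -, -⟩ := herm_decomp hH
  rw [hPQ, map_sub]
  exact ((hpos P hP).isHermitian).sub ((hpos Q hQ).isHermitian)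

lemma star_pres {Φ : Matrix n n ℂ →ₗ[ℂ] Matrix n n ℂ}
    (hpos : ∀ A : Matrix n n ℂ, A.PosSemidef → (Φ A).PosSemidef)
    (A : Matrix n n ℂ) : Φ Aᴴ = (Φ A)ᴴ := by
  have h1 : (A + Aᴴ).IsHermitian := by
    rw [Matrix.IsHermitian, conjTranspose_add, conjTranspose_conjTranspose, add_comm]
  have h2 : (Complex.I • A - Complex.I • Aᴴ).IsHermitian := by
    rw [Matrix.IsHermitian, conjTranspose_sub, conjTranspose_smul, conjTranspose_smul,
      conjTranspose_conjTranspose, Complex.star_def, Complex.conj_I]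
    module
  have hA : A = (1/2 : ℂ) • (A + Aᴴ) +
      (-(Complex.I)/2) • (Complex.I • A - Complex.I • Aᴴ) := by
    match_scalars <;> simp [Complex.ext_iff] <;> ring
  have hA' : Aᴴ = (1/2 : ℂ) • (A + Aᴴ) +
      ((Complex.I)/2) • (Complex.I • A - Complex.I • Aᴴ) := by
    match_scalars <;> simp [Complex.ext_iff] <;> ring
  have g1 := herm_pres hpos h1
  have g2 := herm_pres hpos h2
  calc Φ Aᴴ = (1/2 : ℂ) • Φ (A + Aᴴ) +
      ((Complex.I)/2) • Φ (Complex.I • A - Complex.I • Aᴴ) := by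
        rw [← _root_.map_smul, ← _root_.map_smul, ← map_add, ← hA']
    _ = (Φ A)ᴴ := by
        conv_rhs => rw [hA, map_add, _root_.map_smul, _root_.map_smul]
        rw [conjTranspose_add, conjTranspose_smul, conjTranspose_smul, g1.eq, g2.eq,
          Complex.star_def]
        congr 1
        · congr 1
          simp [Complex.ext_iff, Complex.div_re, Complex.div_im, Complex.normSq]
        · congr 1
          simp [Complex.ext_iff, Complex.div_re, Complex.div_im, Complex.normSq]

/-- if `X` is PSD and `S` is hermitian with `S * X * S = 0`, then `X * S = 0` and `S * X = 0` -/
lemma sandwich_zero {X S : Matrix n n ℂ} (hX : X.PosSemidef) (hS : Sᴴ = S)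
    (h : S * X * S = 0) : X * S = 0 ∧ S * X = 0 := by
  obtain ⟨C, rfl⟩ := psd_exists_factor hX
  have h1 : (C * S)ᴴ * (C * S) = 0 := by
    rw [conjTranspose_mul, hS]
    calc S * Cᴴ * (C * S) = S * (Cᴴ * C) * S := by simp [Matrix.mul_assoc]
      _ = 0 := h
  have hCS : C * S = 0 := conjTranspose_mul_self_eq_zero.mp h1
  have hXS : Cᴴ * C * S = 0 := by rw [Matrix.mul_assoc, hCS, Matrix.mul_zero]
  refine ⟨hXS, ?_⟩
  have := congrArg conjTranspose hXS
  simpa [conjTranspose_mul, hS, Matrix.mul_assoc] using this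

lemma exists_psd_fixed {Φ : Matrix n n ℂ →ₗ[ℂ] Matrix n n ℂ}
    (hpos : ∀ A : Matrix n n ℂ, A.PosSemidef → (Φ A).PosSemidef)
    (hTP : ∀ A : Matrix n n ℂ, (Φ A).trace = A.trace)
    (hker : Module.finrank ℂ (LinearMap.ker (LinearMap.id - Φ)) = 1) :
    ∃ σ : Matrix n n ℂ, σ.PosSemidef ∧ σ ≠ 0 ∧ Φ σ = σ := by
  classical
  -- get a nonzero fixed point
  have hne : LinearMap.ker (LinearMap.id - Φ) ≠ ⊥ := by
    intro h
    rw [h, finrank_bot] at hker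
    exact zero_ne_one hker
  obtain ⟨B, hBK, hB0⟩ := (Submodule.ne_bot_iff _).mp hne
  have hfix : Φ B = B := by
    have := LinearMap.mem_ker.mp hBK
    rw [LinearMap.sub_apply, LinearMap.id_apply, sub_eq_zero] at this
    exact this.symm
  have hfixH : Φ Bᴴ = Bᴴ := by rw [star_pres hpos, hfix]
  -- get a nonzero hermitian fixed point
  obtain ⟨B₀, hB₀H, hB₀0, hB₀fix⟩ :
      ∃ B₀ : Matrix n n ℂ, B₀.IsHermitian ∧ B₀ ≠ 0 ∧ Φ B₀ = B₀ := by
    by_cases hc : B + Bᴴ = 0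
    · refine ⟨Complex.I • B - Complex.I • Bᴴ, ?_, ?_, ?_⟩
      · rw [Matrix.IsHermitian, conjTranspose_sub, conjTranspose_smul, conjTranspose_smul,
          conjTranspose_conjTranspose, Complex.star_def, Complex.conj_I]
        module
      · have hBH : Bᴴ = -B := eq_neg_of_add_eq_zero_right hc
        intro h
        apply hB0
        rw [hBH, smul_neg, sub_neg_eq_add, ← two_smul ℂ] at h
        rcases smul_eq_zero.mp h with h2 | h3
        · exact absurd h2 two_ne_zero
        · rcases smul_eq_zero.mp h3 with h4 | h5
          · exact absurd h4 Complex.I_ne_zero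
          · exact h5
      · rw [map_sub, _root_.map_smul, _root_.map_smul, hfix, hfixH]
    · exact ⟨B + Bᴴ, by rw [Matrix.IsHermitian, conjTranspose_add,
        conjTranspose_conjTranspose, add_comm], hc,
        by rw [map_add, hfix, hfixH]⟩
  -- decompose
  obtain ⟨P, Q, R, hP, hQ, hPQ, hRH, hRR, hRP, hRQ⟩ := herm_decomp hB₀H
  set X := Φ P with hX
  set Y := Φ Q with hY
  have hXpsd := hpos P hP
  have hYpsd := hpos Q hQ
  have hXY : X - Y = B₀ := by rw [hX, hY, ← map_sub, ← hPQ, hB₀fix]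
  have hPR : P * R = P := by
    have := congrArg conjTranspose hRP
    rwa [conjTranspose_mul, hRH, hP.isHermitian.eq] at this
  set S : Matrix n n ℂ := 1 - R with hSdef
  have hSH : Sᴴ = S := by rw [hSdef, conjTranspose_sub, conjTranspose_one, hRH]
  have hSS : S * S = S := by
    rw [hSdef, Matrix.mul_sub, Matrix.sub_mul, Matrix.sub_mul, hRR]
    simp
  -- trace bookkeeping
  have htrRB : (R * B₀).trace = P.trace := by
    rw [hPQ, Matrix.mul_sub, hRP, hRQ, sub_zero]
  have htrX : X.trace = P.trace := hTP P
  have hSXS : (S * X * S).PosSemidef := by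
    have := hXpsd.mul_mul_conjTranspose_same S
    rwa [hSH] at this
  have hRYR : (R * Y * R).PosSemidef := by
    have := hYpsd.mul_mul_conjTranspose_same R
    rwa [hRH] at this
  have htrSX : (S * X * S).trace = X.trace - (R * X).trace := by
    rw [Matrix.trace_mul_cycle S X S, hSS, hSdef, Matrix.sub_mul, Matrix.one_mul, trace_sub]
  have htrRY : (R * Y * R).trace = (R * Y).trace := by
    rw [Matrix.trace_mul_cycle R Y R, hRR]
  have htr1 : (R * X).trace - (R * Y).trace = P.trace := by
    rw [← trace_sub, ← Matrix.mul_sub, hXY, htrRB]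
  have hle1 : (R * X).trace ≤ P.trace := by
    have h0 : 0 ≤ (S * X * S).trace := trace_nonneg_of_psd hSXS
    rw [htrSX, htrX] at h0
    exact sub_nonneg.mp h0
  have hb0 : 0 ≤ (R * Y).trace := htrRY ▸ trace_nonneg_of_psd hRYR
  have hble : (R * Y).trace ≤ 0 := by
    have : (R * Y).trace = (R * X).trace - P.trace := by
      rw [← htr1]; ring
    rw [this]
    exact sub_nonpos.mpr hle1
  have hb : (R * Y).trace = 0 := le_antisymm hble hb0
  have haeq : (R * X).trace = P.trace := by
    have := htr1
    rw [hb, sub_zero] at this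
    exact this
  have hSXS0 : S * X * S = 0 := by
    refine eq_zero_of_psd_trace_zero hSXS ?_
    rw [htrSX, htrX, haeq, sub_self]
  have hRYR0 : R * Y * R = 0 := by
    refine eq_zero_of_psd_trace_zero hRYR ?_
    rw [htrRY, hb]
  obtain ⟨hXS0, hSX0⟩ := sandwich_zero hXpsd hSH hSXS0
  have hXR : X * R = X := by
    rw [hSdef, Matrix.mul_sub, Matrix.mul_one, sub_eq_zero] at hXS0
    exact hXS0.symm
  have hRX : R * X = X := by
    rw [hSdef, Matrix.sub_mul, Matrix.one_mul, sub_eq_zero] at hSX0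
    exact hSX0.symm
  -- conclude Φ P = P
  have hPfix : Φ P = P := by
    have e1 : R * B₀ * R = P := by
      rw [hPQ, Matrix.mul_sub, hRP, hRQ, sub_zero, hPR]
    have e2 : R * B₀ * R = X := by
      rw [← hXY, Matrix.mul_sub, Matrix.sub_mul, hRYR0, sub_zero, hRX, hXR]
    exact e2.symm.trans e1
  have hQfix : Φ Q = Q := by
    have hQeq : Q = P - B₀ := by rw [hPQ]; abel
    rw [hQeq, map_sub, hPfix, hB₀fix]
  by_cases hP0 : P = 0
  · refine ⟨Q, hQ, ?_, hQfix⟩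
    intro h
    apply hB₀0
    rw [hPQ, hP0, h, sub_zero]
  · exact ⟨P, hP, hP0, hPfix⟩

lemma psd_smul {A : Matrix n n ℂ} (hA : A.PosSemidef) {r : ℝ} (hr : 0 ≤ r) :
    ((r : ℂ) • A).PosSemidef := by
  constructor
  · rw [Matrix.IsHermitian, conjTranspose_smul, hA.isHermitian.eq, Complex.star_def,
      Complex.conj_ofReal]
  · intro x
    exact (hA.smul (Complex.zero_le_real.mpr hr)).2 x

/-- the matrix-to-euclidean-space equivalence -/
noncomputable def matEquiv : Matrix n n ℂ ≃ₗ[ℂ] EuclideanSpace ℂ (n × n) :=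
  (LinearEquiv.curry ℂ ℂ n n).symm ≪≫ₗ (WithLp.linearEquiv 2 ℂ ((n × n) → ℂ)).symm

lemma matEquiv_inner (X Y : Matrix n n ℂ) :
    (inner ℂ (matEquiv X) (matEquiv Y) : ℂ) = (Xᴴ * Y).trace := by
  simp only [PiLp.inner_apply, RCLike.inner_apply, matEquiv, LinearEquiv.trans_apply,
    WithLp.linearEquiv_symm_apply, LinearEquiv.coe_curry_symm]
  rw [Matrix.trace]
  rw [Fintype.sum_prod_type]
  simp [Matrix.diag_apply, Matrix.mul_apply, Matrix.conjTranspose_apply, Function.uncurry,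
    mul_comm]
  rw [Finset.sum_comm]
  refine Finset.sum_congr rfl fun j _ => Finset.sum_congr rfl fun i _ => ?_
  rfl

end Aux

/-- if a trace-preserving positive linear map `Φ` on `L(X)` has a
one-dimensional fixed-point space, then its unique fixed point (normalized to
unit trace) can be chosen to be a density operator `ρ_∞` (spanning the fixed
space), and every `A` with `Tr(ρ_∞ A) = 0` lies in `Im(Id − Φ†)`, where `Ψ = Φ†`
is the Hilbert–Schmidt adjoint of `Φ`. -/
theorem positive_tp_fixed_point_and_range
    {n : Type*} [Fintype n] [DecidableEq n]
    (Φ Ψ : Matrix n n ℂ →ₗ[ℂ] Matrix n n ℂ)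
    (hpos : ∀ A : Matrix n n ℂ, A.PosSemidef → (Φ A).PosSemidef)
    (hTP : ∀ A : Matrix n n ℂ, (Φ A).trace = A.trace)
    (hker : Module.finrank ℂ (LinearMap.ker (LinearMap.id - Φ)) = 1)
    (hadj : ∀ A B : Matrix n n ℂ, ((Φ A)ᴴ * B).trace = (Aᴴ * Ψ B).trace) :
    ∃ ρinf : Matrix n n ℂ,
      ρinf.PosSemidef ∧ ρinf.trace = 1 ∧ Φ ρinf = ρinf ∧
      (∀ A : Matrix n n ℂ, Φ A = A → ∃ z : ℂ, A = z • ρinf) ∧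
      (∀ A : Matrix n n ℂ, (ρinf * A).trace = 0 →
        ∃ L : Matrix n n ℂ, A = L - Ψ L) := by
  classical
  obtain ⟨σ, hσpsd, hσ0, hσfix⟩ := exists_psd_fixed hpos hTP hker
  have ht0 : 0 ≤ σ.trace := trace_nonneg_of_psd hσpsd
  have htne : σ.trace ≠ 0 := fun h => hσ0 (eq_zero_of_psd_trace_zero hσpsd h)
  obtain ⟨r, hr, hrt⟩ : ∃ r : ℝ, 0 ≤ r ∧ σ.trace = (r : ℂ) := by
    have h := Complex.le_def.mp ht0
    refine ⟨σ.trace.re, by simpa using h.1, ?_⟩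
    apply Complex.ext
    · simp
    · simp [← h.2]
  have hrne : r ≠ 0 := fun h => htne (by rw [hrt, h]; simp)
  have hrpos : 0 < r := lt_of_le_of_ne hr (Ne.symm hrne)
  set ρ : Matrix n n ℂ := ((r⁻¹ : ℝ) : ℂ) • σ with hρ
  have hρpsd : ρ.PosSemidef := psd_smul hσpsd (inv_nonneg.mpr hr)
  have hρtr : ρ.trace = 1 := by
    rw [hρ, trace_smul, hrt, smul_eq_mul, ← Complex.ofReal_mul, inv_mul_cancel₀ hrne]
    simp
  have hρfix : Φ ρ = ρ := by rw [hρ, _root_.map_smul, hσfix]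
  have hρne : ρ ≠ 0 := fun h => by
    rw [h, trace_zero] at hρtr
    exact zero_ne_one hρtr
  have hρker : ρ ∈ LinearMap.ker (LinearMap.id - Φ) := by
    rw [LinearMap.mem_ker, LinearMap.sub_apply, LinearMap.id_apply, hρfix, sub_self]
  have hspan : (ℂ ∙ ρ) = LinearMap.ker (LinearMap.id - Φ) := by
    apply Submodule.eq_of_le_of_finrank_eq
    · rw [Submodule.span_singleton_le_iff_mem]; exact hρker
    · rw [finrank_span_singleton hρne, hker]
  have hfixmem : ∀ A : Matrix n n ℂ, Φ A = A → ∃ z : ℂ, A = z • ρ := by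
    intro A hA
    have hAker : A ∈ LinearMap.ker (LinearMap.id - Φ) := by
      rw [LinearMap.mem_ker, LinearMap.sub_apply, LinearMap.id_apply, hA, sub_self]
    rw [← hspan] at hAker
    obtain ⟨z, hz⟩ := Submodule.mem_span_singleton.mp hAker
    exact ⟨z, hz.symm⟩
  refine ⟨ρ, hρpsd, hρtr, hρfix, hfixmem, ?_⟩
  intro A hA
  set e : Matrix n n ℂ ≃ₗ[ℂ] EuclideanSpace ℂ (n × n) := matEquiv with he
  set F : EuclideanSpace ℂ (n × n) →ₗ[ℂ] EuclideanSpace ℂ (n × n) :=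
    e.toLinearMap ∘ₗ (LinearMap.id - Φ) ∘ₗ e.symm.toLinearMap with hF
  set G : EuclideanSpace ℂ (n × n) →ₗ[ℂ] EuclideanSpace ℂ (n × n) :=
    e.toLinearMap ∘ₗ (LinearMap.id - Ψ) ∘ₗ e.symm.toLinearMap with hG
  have hFG : ∀ x y : EuclideanSpace ℂ (n × n), (inner ℂ (F x) y : ℂ) = inner ℂ x (G y) := by
    intro x y
    have h1 : (inner ℂ (F x) y : ℂ) = ((e.symm x - Φ (e.symm x))ᴴ * (e.symm y)).trace := by
      conv_lhs => rw [show F x = e (e.symm x - Φ (e.symm x)) from rfl,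
        ← e.apply_symm_apply y]
      exact matEquiv_inner _ _
    have h2 : (inner ℂ x (G y) : ℂ) = ((e.symm x)ᴴ * (e.symm y - Ψ (e.symm y))).trace := by
      conv_lhs => rw [show G y = e (e.symm y - Ψ (e.symm y)) from rfl,
        ← e.apply_symm_apply x]
      exact matEquiv_inner _ _
    rw [h1, h2, conjTranspose_sub, Matrix.sub_mul, Matrix.mul_sub, trace_sub, trace_sub,
      hadj (e.symm x) (e.symm y)]
  have hFadj : F = LinearMap.adjoint G := (LinearMap.eq_adjoint_iff F G).mpr hFG
  have hGadj : G = LinearMap.adjoint F := by rw [hFadj, LinearMap.adjoint_adjoint]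
  have hkerF : LinearMap.ker F = (LinearMap.range G)ᗮ := by
    ext x
    rw [LinearMap.mem_ker, Submodule.mem_orthogonal]
    constructor
    · intro hx u hu
      obtain ⟨y, rfl⟩ := hu
      rw [hGadj, LinearMap.adjoint_inner_left, hx, inner_zero_right]
    · intro h
      have h2 : (inner ℂ (F x) (F x) : ℂ) = 0 := by
        have := h (G (F x)) ⟨F x, rfl⟩
        rwa [hGadj, LinearMap.adjoint_inner_left] at this
      exact inner_self_eq_zero.mp h2
  have hrange : LinearMap.range G = (LinearMap.ker F)ᗮ := by
    rw [hkerF, Submodule.orthogonal_orthogonal]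
  have hmem : e A ∈ (LinearMap.ker F)ᗮ := by
    rw [Submodule.mem_orthogonal]
    intro u hu
    have hFu : F u = 0 := hu
    have hsub : e.symm u - Φ (e.symm u) = 0 := by
      have := congrArg e.symm hFu
      rwa [show e.symm (F u) = e.symm u - Φ (e.symm u) from e.symm_apply_apply _,
        map_zero] at this
    have hfix' : Φ (e.symm u) = e.symm u := (sub_eq_zero.mp hsub).symm
    obtain ⟨z, hz⟩ := hfixmem _ hfix'
    have hiu : (inner ℂ u (e A) : ℂ) = ((e.symm u)ᴴ * A).trace := by
      conv_lhs => rw [← e.apply_symm_apply u]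
      exact matEquiv_inner _ _
    rw [hiu, hz, conjTranspose_smul, Matrix.smul_mul, trace_smul, hρpsd.isHermitian.eq,
      hA, smul_zero]
  rw [← hrange] at hmem
  obtain ⟨y, hy⟩ := hmem
  refine ⟨e.symm y, ?_⟩
  have := congrArg e.symm hy
  rwa [show e.symm (G y) = e.symm y - Ψ (e.symm y) from e.symm_apply_apply _,
    e.symm_apply_apply, eq_comm] at this
end
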